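/- There exists no lightlike hypersurface (M,g), tangent to the structure vector field ζ, of an indefinite Sasakian manifold (M̄, φ̄, ζ, η, ḡ), whose local second fundamental form B is parallel, i.e. such that (∇_X B)(Y,Z) := X·B(Y,Z) − B(∇_X Y, Z) − B(Y, ∇_X Z) = 0 for all X, Y, Z tangent to M. -/

import Mathlib

/-- An algebraic model, at the level of (local) smooth functions and vector fields, of a
lightlike hypersurface `(M,g)`, tangent to the structure vector field `ζ`, of an
indefinite Sasakian manifold `(M̄, φ̄, ζ, η, ḡ)`, together with a chosen screen
distribution `S(TM)` (containing `ζ`, `φ̄ ξ` and `φ̄ N`), a (local) section `ξ` of the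
rank-one normal bundle `TM⊥ ⊆ TM`, the associated null transversal section `N`, and all
the induced objects of the Gauss–Weingarten equations.

* `F` models the commutative `ℝ`-algebra of smooth functions on (an open subset of) `M`;
* `E` models the `F`-module of sections of the ambient tangent bundle `TM̄` restricted to `M`;
* `η(X)` is encoded throughout as `ḡ(X,ζ)`, `u(X)` as `g(X,V)`, `v(X)` as `g(X,U)` and
  `θ(X)` as `ḡ(X,N)`. -/
structure SasakiLightlikeHypersurface (F : Type) [CommRing F] [Algebra ℝ F]
    (E : Type) [AddCommGroup E] [Module F E] where
  /-- the submodule of vector fields tangent to the hypersurface `M` -/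
  TM : Submodule F E
  /-- the ambient metric `ḡ` (whose restriction to `TM` is the degenerate induced metric `g`) -/
  gbar : E →ₗ[F] E →ₗ[F] F
  gbar_symm : ∀ X Y : E, gbar X Y = gbar Y X
  /-- the directional derivative `X ⬝ f` of functions along tangent vector fields -/
  D : TM → Derivation ℝ F F
  D_add : ∀ X Y : TM, D (X + Y) = D X + D Y
  D_smul : ∀ (f : F) (X : TM) (k : F), D (f • X) k = f * D X k
  /-- the Lie bracket of vector fields tangent to `M` -/
  bracket : TM → TM → TM
  D_bracket : ∀ (X Y : TM) (f : F), D (bracket X Y) f = D X (D Y f) - D Y (D X f)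
  /-- the ambient Levi-Civita connection `∇̄`, in directions tangent to `M` -/
  nablaBar : TM → E → E
  nablaBar_add : ∀ (X Y : TM) (Z : E), nablaBar (X + Y) Z = nablaBar X Z + nablaBar Y Z
  nablaBar_smul : ∀ (f : F) (X : TM) (Z : E), nablaBar (f • X) Z = f • nablaBar X Z
  nablaBar_add' : ∀ (X : TM) (Y Z : E), nablaBar X (Y + Z) = nablaBar X Y + nablaBar X Z
  nablaBar_leibniz : ∀ (X : TM) (f : F) (Y : E),
    nablaBar X (f • Y) = D X f • Y + f • nablaBar X Y
  nablaBar_metric : ∀ (X : TM) (Y Z : E),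
    D X (gbar Y Z) = gbar (nablaBar X Y) Z + gbar Y (nablaBar X Z)
  nablaBar_torsion_free : ∀ X Y : TM,
    nablaBar X (Y : E) - nablaBar Y (X : E) = (bracket X Y : E)
  /-- a (local) section `ξ` of the rank-one lightlike normal bundle `TM⊥ ⊆ TM` -/
  xi : TM
  xi_normal : ∀ Y : TM, gbar (xi : E) (Y : E) = 0
  xi_spans : ∀ X : TM, (∀ Y : TM, gbar (X : E) (Y : E) = 0) →
    ∃ f : F, (X : E) = f • (xi : E)
  /-- the screen distribution `S(TM)`, a nondegenerate complement of `TM⊥` in `TM` -/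
  S : Submodule F E
  S_le : S ≤ TM
  S_compl : ∀ X : TM, ∃ W ∈ S, ∃ f : F, (X : E) = W + f • (xi : E)
  S_nondeg : ∀ W ∈ S, (∀ Z ∈ S, gbar W Z = 0) → W = 0
  /-- the null transversal section `N`, with `ḡ(ξ,N) = 1`, `ḡ(N,N) = 0`, `ḡ(N, S(TM)) = 0` -/
  Nt : E
  gbar_xi_Nt : gbar (xi : E) Nt = 1
  gbar_Nt_Nt : gbar Nt Nt = 0
  gbar_Nt_S : ∀ Z ∈ S, gbar Nt Z = 0
  /-- the induced connection `∇` on `M` -/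
  nabla : TM → TM → TM
  /-- the local second fundamental form `B` of `M` (the second fundamental form being
  `h(X,Y) = B(X,Y) N`) -/
  B : TM → TM → F
  /-- Gauss equation: `∇̄_X Y = ∇_X Y + B(X,Y) N` -/
  gauss : ∀ X Y : TM, nablaBar X (Y : E) = (nabla X Y : E) + B X Y • Nt
  /-- the shape operator `A_N` of `M` -/
  AN : TM → TM
  /-- the transversal `1`-form `τ`, so that the transversal connection is `∇ᵗ_X N = τ(X) N` -/
  tau : TM → F
  /-- Weingarten equation: `∇̄_X N = −A_N X + τ(X) N` -/
  weingarten : ∀ X : TM, nablaBar X Nt = -(AN X : E) + tau X • Nt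
  /-- the screen shape operator `A*_ξ` -/
  Astar : TM → TM
  /-- `∇_X ξ = −A*_ξ X − τ(X) ξ` -/
  weingarten_screen : ∀ X : TM, nablaBar X (xi : E) = -(Astar X : E) - tau X • (xi : E)
  /-- the projection `P` of `TM` onto `S(TM)`: `X = PX + θ(X) ξ`, `θ(X) = ḡ(X,N)` -/
  P : TM → TM
  P_mem : ∀ X : TM, (P X : E) ∈ S
  P_spec : ∀ X : TM, (X : E) = (P X : E) + gbar (X : E) Nt • (xi : E)
  /-- the induced connection `∇*` on the screen distribution -/
  nablaStar : TM → TM → TM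
  /-- the local second fundamental form `C` of the screen distribution -/
  C : TM → TM → F
  nablaStar_mem : ∀ (X Y : TM), (Y : E) ∈ S → (nablaStar X Y : E) ∈ S
  /-- screen Gauss equation: `∇_X PY = ∇*_X PY + C(X,PY) ξ` -/
  screen_gauss : ∀ (X Y : TM), (Y : E) ∈ S → nabla X Y = nablaStar X Y + C X Y • xi
  /-- the ambient almost contact structure tensor `φ̄` -/
  phibar : E →ₗ[F] E
  /-- the structure vector field `ζ`, tangent to `M` and lying in the screen distribution -/
  zeta : TM
  zeta_mem : (zeta : E) ∈ S
  gbar_zeta_zeta : gbar (zeta : E) (zeta : E) = 1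
  /-- `φ̄² X = −X + η(X) ζ`, where `η(X) = ḡ(X,ζ)` -/
  phibar_sq : ∀ X : E, phibar (phibar X) = -X + gbar X (zeta : E) • (zeta : E)
  /-- `ḡ(φ̄X, φ̄Y) = ḡ(X,Y) − η(X) η(Y)` -/
  phibar_metric : ∀ X Y : E,
    gbar (phibar X) (phibar Y) = gbar X Y - gbar X (zeta : E) * gbar Y (zeta : E)
  /-- Sasakian condition: `(∇̄_X φ̄) Y = ḡ(X,Y) ζ − η(Y) X` -/
  sasaki : ∀ (X : TM) (Y : E), nablaBar X (phibar Y) - phibar (nablaBar X Y)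
    = gbar (X : E) Y • (zeta : E) - gbar Y (zeta : E) • (X : E)
  /-- `∇̄_X ζ = −φ̄ X` -/
  sasaki_zeta : ∀ X : TM, nablaBar X (zeta : E) = -(phibar (X : E))
  /-- `U = −φ̄ N`, tangent to `M` and lying in the screen distribution -/
  U : TM
  U_mem : (U : E) ∈ S
  U_spec : (U : E) = -(phibar Nt)
  /-- `V = −φ̄ ξ`, tangent to `M` and lying in the screen distribution -/
  V : TM
  V_mem : (V : E) ∈ S
  V_spec : (V : E) = -(phibar (xi : E))
  /-- the induced structure tensor `φ` on `M` -/
  phi : TM → TM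
  /-- `φ̄ X = φ X + u(X) N`, where `u(X) = g(X,V)` -/
  phi_spec : ∀ X : TM, phibar (X : E) = (phi X : E) + gbar (X : E) (V : E) • Nt


namespace SasakiLightlikeHypersurface

variable {F : Type} [CommRing F] [Algebra ℝ F] {E : Type} [AddCommGroup E] [Module F E]
variable (H : SasakiLightlikeHypersurface F E)

lemma half_cancel {t : F} (h : t + t = 0) : t = 0 := by
  have h2 : (2:ℝ) • t = 0 := by rw [two_smul]; exact h
  have h3 := congrArg (fun x : F => (2⁻¹:ℝ) • x) h2
  simpa [smul_smul] using h3

/-- `ḡ(X,ξ) = 0` for `X ∈ TM`. -/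
lemma g_tm_xi (W : H.TM) : H.gbar (W : E) (H.xi : E) = 0 := by
  rw [H.gbar_symm]; exact H.xi_normal W

lemma g_N_xi : H.gbar H.Nt (H.xi : E) = 1 := by
  rw [H.gbar_symm]; exact H.gbar_xi_Nt

lemma eta_N : H.gbar H.Nt (H.zeta : E) = 0 := H.gbar_Nt_S _ H.zeta_mem

lemma g_N_V : H.gbar H.Nt (H.V : E) = 0 := H.gbar_Nt_S _ H.V_mem

lemma eta_xi : H.gbar (H.xi : E) (H.zeta : E) = 0 := H.xi_normal H.zeta

/-- `η(φ̄X) = 0` for `X` tangent to `M`. -/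
lemma eta_phibar_tm (X : H.TM) : H.gbar (H.phibar (X:E)) (H.zeta:E) = 0 := by
  have h := H.nablaBar_metric X H.zeta H.zeta
  rw [H.gbar_zeta_zeta, H.sasaki_zeta] at h
  simp only [Derivation.map_one_eq_zero, map_neg, LinearMap.neg_apply] at h
  apply half_cancel (t := H.gbar (H.phibar (X:E)) (H.zeta:E))
  linear_combination h - H.gbar_symm (H.zeta:E) (H.phibar (X:E))

/-- the fundamental symmetry identity for `φ̄`. -/
lemma I0 (A B : E) : H.gbar A (H.phibar B) + H.gbar (H.phibar A) B
    = H.gbar A (H.zeta:E) * H.gbar (H.phibar B) (H.zeta:E)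
      + H.gbar B (H.zeta:E) * H.gbar (H.phibar A) (H.zeta:E) := by
  have h1 := H.phibar_metric A (H.phibar B)
  rw [H.phibar_sq B] at h1
  simp only [map_add, map_neg, map_smul, LinearMap.add_apply, LinearMap.neg_apply,
    LinearMap.smul_apply, smul_eq_mul] at h1
  linear_combination -h1

/-- antisymmetry of `φ̄` w.r.t. `ḡ` on `TM`. -/
lemma antisym_tm (X Y : H.TM) :
    H.gbar (H.phibar (X:E)) (Y:E) = -H.gbar (X:E) (H.phibar (Y:E)) := by
  have h := H.I0 (X:E) (Y:E)
  rw [H.eta_phibar_tm X, H.eta_phibar_tm Y] at h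
  linear_combination h

lemma u_zeta : H.gbar (H.zeta:E) (H.V:E) = 0 := by
  rw [H.gbar_symm, H.V_spec]
  simp only [map_neg, LinearMap.neg_apply]
  rw [H.eta_phibar_tm H.xi]; ring

lemma phibar_zeta : H.phibar (H.zeta : E) = 0 := by
  have hcoe : H.phibar (H.zeta:E) = (H.phi H.zeta : E) := by
    rw [H.phi_spec H.zeta, H.u_zeta, zero_smul, add_zero]
  have horth : ∀ Y : H.TM, H.gbar ((H.phi H.zeta : E)) (Y:E) = 0 := by
    intro Y
    rw [← hcoe, H.antisym_tm H.zeta Y, H.gbar_symm]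
    rw [H.eta_phibar_tm Y]; ring
  obtain ⟨c, hc⟩ := H.xi_spans (H.phi H.zeta) horth
  have hNphz : H.gbar H.Nt (H.phibar (H.zeta:E)) = 0 := by
    have h := H.I0 H.Nt (H.zeta:E)
    rw [H.eta_N, H.gbar_zeta_zeta, H.eta_phibar_tm H.zeta] at h
    linear_combination h
  have hc0 : c = 0 := by
    have h2 := hNphz
    rw [hcoe, hc] at h2
    simpa [H.g_N_xi] using h2
  rw [hcoe, hc, hc0, zero_smul]

lemma eta_phibar (A : E) : H.gbar (H.phibar A) (H.zeta:E) = 0 := by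
  have h1 := H.phibar_sq (H.phibar A)
  have h2 := congrArg H.phibar (H.phibar_sq A)
  rw [map_add, map_neg, map_smul, H.phibar_zeta, smul_zero, add_zero] at h2
  rw [h2] at h1
  have h3 := congrArg (fun w => H.gbar w (H.zeta:E)) h1
  simp only [map_add, map_neg, map_smul, LinearMap.add_apply, LinearMap.neg_apply,
    LinearMap.smul_apply, smul_eq_mul, H.gbar_zeta_zeta, mul_one] at h3
  linear_combination -h3

lemma eta_U : H.gbar (H.U:E) (H.zeta:E) = 0 := by
  rw [H.U_spec]
  simp [H.eta_phibar H.Nt]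

lemma u_U : H.gbar (H.U:E) (H.V:E) = 1 := by
  rw [H.U_spec, H.V_spec]
  simp only [map_neg, LinearMap.neg_apply, neg_neg]
  rw [H.phibar_metric, H.g_N_xi, H.eta_N, H.eta_xi]; ring

lemma phibar_U : H.phibar (H.U:E) = H.Nt := by
  rw [H.U_spec, map_neg, H.phibar_sq, H.eta_N, zero_smul, add_zero, neg_neg]

lemma phibar_V : H.phibar (H.V:E) = (H.xi:E) := by
  rw [H.V_spec, map_neg, H.phibar_sq, H.eta_xi, zero_smul, add_zero, neg_neg]

lemma phi_U : H.phi H.U = 0 := by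
  have h := H.phi_spec H.U
  rw [H.phibar_U, H.u_U, one_smul] at h
  exact ZeroMemClass.coe_eq_zero.mp (right_eq_add.mp h)

lemma phi_coe (X : H.TM) :
    (H.phi X : E) = H.phibar (X:E) - H.gbar (X:E) (H.V:E) • H.Nt := by
  rw [H.phi_spec X]; abel

lemma u_phi (X : H.TM) : H.gbar (H.phi X : E) (H.V:E) = 0 := by
  rw [H.phi_coe]
  simp only [map_sub, map_smul, LinearMap.sub_apply, LinearMap.smul_apply, smul_eq_mul]
  rw [H.antisym_tm X H.V, H.phibar_V, H.g_tm_xi X, H.g_N_V]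
  ring

lemma nablaBar_zero (X : H.TM) : H.nablaBar X 0 = 0 := by
  have h := H.nablaBar_add' X 0 0
  rw [add_zero] at h
  exact right_eq_add.mp h

lemma nablaBar_neg (X : H.TM) (w : E) : H.nablaBar X (-w) = -H.nablaBar X w := by
  have h2 : H.D X (-1 : F) = 0 := by
    rw [show (-1:F) = -(1:F) from rfl, map_neg, Derivation.map_one_eq_zero, neg_zero]
  rw [show -w = (-1:F) • w by simp, H.nablaBar_leibniz, h2, zero_smul, zero_add]
  simp

lemma B_eq (X Y : H.TM) : H.B X Y = H.gbar (H.nablaBar X (Y:E)) (H.xi:E) := by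
  rw [H.gauss X Y]
  simp only [map_add, map_smul, LinearMap.add_apply, LinearMap.smul_apply, smul_eq_mul]
  rw [H.g_tm_xi (H.nabla X Y), H.g_N_xi]; ring

lemma B_sym (X Y : H.TM) : H.B X Y = H.B Y X := by
  rw [H.B_eq, H.B_eq]
  have h := congrArg (fun w => H.gbar w (H.xi:E)) (H.nablaBar_torsion_free X Y)
  simp only [map_sub, LinearMap.sub_apply] at h
  rw [H.g_tm_xi (H.bracket X Y)] at h
  linear_combination h

lemma B_zero (X : H.TM) : H.B X 0 = 0 := by
  rw [H.B_eq]
  rw [show ((0 : H.TM) : E) = 0 from rfl, H.nablaBar_zero]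
  simp

lemma B_xi (X : H.TM) : H.B X H.xi = 0 := by
  rw [H.B_eq, H.weingarten_screen]
  simp only [map_add, map_neg, map_sub, map_smul, LinearMap.add_apply,
    LinearMap.neg_apply, LinearMap.sub_apply, LinearMap.smul_apply, smul_eq_mul]
  rw [H.g_tm_xi (H.Astar X), H.xi_normal H.xi]; ring

lemma B_zeta (X : H.TM) : H.B X H.zeta = -H.gbar (X:E) (H.V:E) := by
  rw [H.B_eq, H.sasaki_zeta]
  simp only [map_neg, LinearMap.neg_apply]
  rw [H.antisym_tm X H.xi]
  have hv : H.phibar (H.xi:E) = -(H.V:E) := by rw [H.V_spec, neg_neg]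
  rw [hv]
  simp

lemma gA (X Y : H.TM) : H.gbar (H.Astar X : E) (Y:E) = H.B X Y := by
  have h := H.nablaBar_metric X (H.xi:E) (Y:E)
  rw [H.weingarten_screen] at h
  simp only [map_add, map_neg, map_sub, map_smul, LinearMap.add_apply,
    LinearMap.neg_apply, LinearMap.sub_apply, LinearMap.smul_apply, smul_eq_mul] at h
  rw [H.xi_normal Y] at h
  simp only [map_zero, mul_zero] at h
  rw [H.gbar_symm (H.xi:E) (H.nablaBar X (Y:E)), ← H.B_eq] at h
  linear_combination h

lemma gAN (X : H.TM) : H.gbar (H.Astar X : E) H.Nt = 0 := by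
  have h := H.nablaBar_metric X (H.xi:E) H.Nt
  rw [H.gbar_xi_Nt, Derivation.map_one_eq_zero, H.weingarten_screen, H.weingarten] at h
  simp only [map_add, map_neg, map_sub, map_smul, LinearMap.add_apply,
    LinearMap.neg_apply, LinearMap.sub_apply, LinearMap.smul_apply, smul_eq_mul] at h
  rw [H.gbar_xi_Nt, H.xi_normal (H.AN X)] at h
  linear_combination h

lemma nabla_coe (X Y : H.TM) :
    (H.nabla X Y : E) = H.nablaBar X (Y:E) - H.B X Y • H.Nt := by
  rw [H.gauss X Y]; abel

lemma nabla_zeta (X : H.TM) : H.nabla X H.zeta = -H.phi X := by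
  have h := H.gauss X H.zeta
  rw [H.sasaki_zeta, H.B_zeta] at h
  apply Subtype.coe_injective
  show (H.nabla X H.zeta : E) = ((-H.phi X : H.TM) : E)
  have hneg : ((-H.phi X : H.TM) : E) = -(H.phi X : E) := by simp
  rw [hneg, H.phi_coe]
  linear_combination (norm := module) -h

lemma nabla_xi_coe (X : H.TM) :
    (H.nabla X H.xi : E) = -(H.Astar X : E) - H.tau X • (H.xi : E) := by
  have h := H.gauss X H.xi
  rw [H.B_xi, zero_smul, add_zero] at h
  rw [← h, H.weingarten_screen]

lemma B_nabla_zeta (X Y : H.TM) : H.B Y (H.nabla X H.zeta) = -H.B Y (H.phi X) := by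
  rw [H.nabla_zeta, H.B_eq, H.B_eq]
  have hc : ((-H.phi X : H.TM) : E) = -(H.phi X : E) := by simp
  rw [hc, H.nablaBar_neg]
  simp

lemma phi_sq (X : H.TM) : (H.phi (H.phi X) : E)
    = -(X:E) + H.gbar (X:E) (H.zeta:E) • (H.zeta:E) + H.gbar (X:E) (H.V:E) • (H.U:E) := by
  have h := H.phi_coe (H.phi X)
  rw [H.u_phi X, zero_smul, sub_zero] at h
  rw [h, H.phi_coe X, map_sub, map_smul, H.phibar_sq]
  have hU : H.phibar H.Nt = -(H.U:E) := by rw [H.U_spec, neg_neg]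
  rw [hU]
  module

end SasakiLightlikeHypersurface

/-- There exists no lightlike hypersurface `(M,g)`, tangent to the structure vector field
`ζ`, of an indefinite Sasakian manifold `(M̄, φ̄, ζ, η, ḡ)`, whose local second fundamental
form `B` is parallel, i.e. such that
`(∇_X B)(Y,Z) = X⬝B(Y,Z) − B(∇_X Y, Z) − B(Y, ∇_X Z) = 0` for all `X, Y, Z` tangent to `M`. -/
theorem no_lightlike_hypersurface_with_parallel_B
    (F : Type) [CommRing F] [Algebra ℝ F] [Nontrivial F]
    (E : Type) [AddCommGroup E] [Module F E]
    (H : SasakiLightlikeHypersurface F E)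
    (hpar : ∀ X Y Z : H.TM,
      H.D X (H.B Y Z) - H.B (H.nabla X Y) Z - H.B Y (H.nabla X Z) = 0) :
    False := by
  -- (P1) : B(Y, A*_ξ X) = 0
  have P1 : ∀ X Y : H.TM, H.B Y (H.Astar X) = 0 := by
    intro X Y
    have h := hpar X Y H.xi
    rw [H.B_xi Y, H.B_xi (H.nabla X Y)] at h
    have h2 : H.B Y (H.nabla X H.xi) = -H.B Y (H.Astar X) := by
      rw [H.B_eq, H.nabla_xi_coe X, sub_eq_add_neg, H.nablaBar_add', H.nablaBar_neg,
        H.nablaBar_neg, H.nablaBar_leibniz]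
      simp only [map_add, map_neg, map_smul, LinearMap.add_apply, LinearMap.neg_apply,
        LinearMap.smul_apply, smul_eq_mul]
      rw [← H.B_eq Y (H.Astar X), H.xi_normal H.xi, ← H.B_eq Y H.xi, H.B_xi Y]
      ring
    rw [h2] at h
    simp only [map_zero] at h
    linear_combination h
  -- (P2) : B(X, V) = 0
  have P2 : ∀ X : H.TM, H.B X H.V = 0 := by
    intro X
    have h := hpar X H.xi H.zeta
    rw [H.B_zeta H.xi, H.xi_normal H.V, H.B_sym H.xi (H.nabla X H.zeta),
      H.B_xi (H.nabla X H.zeta), H.B_zeta (H.nabla X H.xi), H.nabla_xi_coe] at h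
    simp only [map_add, map_neg, map_sub, map_smul, LinearMap.add_apply,
      LinearMap.neg_apply, LinearMap.sub_apply, LinearMap.smul_apply, smul_eq_mul,
      neg_zero, map_zero] at h
    rw [H.xi_normal H.V, H.gA X H.V] at h
    linear_combination -h
  -- ∇̄_X V = φ̄(A*_ξ X) − τ(X) V
  have nablaBarV : ∀ X : H.TM,
      H.nablaBar X (H.V:E) = H.phibar (H.Astar X : E) - H.tau X • (H.V:E) := by
    intro X
    have hs := H.sasaki X (H.xi:E)
    rw [H.g_tm_xi X, H.eta_xi, zero_smul, zero_smul, sub_zero] at hs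
    have hs' : H.nablaBar X (H.phibar (H.xi:E)) = H.phibar (H.nablaBar X (H.xi:E)) :=
      sub_eq_zero.mp hs
    rw [H.V_spec, H.nablaBar_neg, hs', H.weingarten_screen]
    simp only [map_add, map_neg, map_sub, map_smul]
    module
  -- ∇̄_X U = φ̄(A_N X) + τ(X) U − θ(X) ζ
  have nablaBarU : ∀ X : H.TM,
      H.nablaBar X (H.U:E) = H.phibar (H.AN X : E) + H.tau X • (H.U:E)
        - H.gbar (X:E) H.Nt • (H.zeta:E) := by
    intro X
    have hs := H.sasaki X H.Nt
    rw [H.eta_N, zero_smul, sub_zero] at hs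
    have h1 : H.nablaBar X (H.phibar H.Nt)
        = H.phibar (H.nablaBar X H.Nt) + H.gbar (X:E) H.Nt • (H.zeta:E) := by
      linear_combination (norm := module) hs
    rw [H.U_spec, H.nablaBar_neg, h1, H.weingarten]
    simp only [map_add, map_neg, map_smul]
    module
  -- (K12) : B(Y, φX) = −B(X, φY) − τ(X) u(Y)
  have K12 : ∀ X Y : H.TM, H.B Y (H.phi X)
      = -H.B X (H.phi Y) - H.tau X * H.gbar (Y:E) (H.V:E) := by
    intro X Y
    have h := hpar X Y H.zeta
    rw [H.B_zeta Y] at h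
    have hD := H.nablaBar_metric X (Y:E) (H.V:E)
    have h1 : H.B (H.nabla X Y) H.zeta = -H.gbar (H.nablaBar X (Y:E)) (H.V:E) := by
      rw [H.B_zeta, H.nabla_coe]
      simp only [map_sub, map_smul, LinearMap.sub_apply, LinearMap.smul_apply, smul_eq_mul]
      rw [H.g_N_V]; ring
    rw [h1, H.B_nabla_zeta X Y, map_neg, hD] at h
    have h3 : H.gbar (Y:E) (H.nablaBar X (H.V:E))
        = -H.B X (H.phi Y) - H.tau X * H.gbar (Y:E) (H.V:E) := by
      rw [nablaBarV X]
      simp only [map_sub, map_smul, smul_eq_mul]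
      rw [H.gbar_symm (Y:E) (H.phibar (H.Astar X:E)), H.antisym_tm (H.Astar X) Y,
        H.phi_spec Y]
      simp only [map_add, map_smul, smul_eq_mul]
      rw [H.gA X (H.phi Y), H.gAN X]
      ring
    rw [h3] at h
    linear_combination h
  -- (K13) : τ(X) = −B(U, φX)
  have K13 : ∀ X : H.TM, H.tau X = -H.B H.U (H.phi X) := by
    intro X
    have h := hpar X H.U H.zeta
    rw [H.B_zeta H.U, H.u_U] at h
    have hD : H.D X (-(1:F)) = 0 := by
      rw [map_neg, Derivation.map_one_eq_zero, neg_zero]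
    rw [hD] at h
    have h1 : H.B (H.nabla X H.U) H.zeta = -H.tau X := by
      rw [H.B_zeta, H.nabla_coe]
      simp only [map_sub, LinearMap.sub_apply, map_smul, LinearMap.smul_apply, smul_eq_mul]
      rw [H.g_N_V, nablaBarU X]
      simp only [map_add, map_sub, map_smul, LinearMap.add_apply, LinearMap.sub_apply,
        LinearMap.smul_apply, smul_eq_mul]
      rw [H.antisym_tm (H.AN X) H.V, H.phibar_V, H.g_tm_xi (H.AN X), H.u_U, H.u_zeta]
      ring
    rw [h1, H.B_nabla_zeta X H.U] at h
    linear_combination h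
  -- τ = 0
  have tauU : H.tau H.U = 0 := by
    rw [K13 H.U, H.phi_U, H.B_zero]; ring
  have tau0 : ∀ X : H.TM, H.tau X = 0 := by
    intro X
    have ha := K12 X H.U
    have hb := K12 H.U X
    rw [H.u_U] at ha
    rw [tauU] at hb
    linear_combination ha - hb
  -- (K16) : B(Y, φX) = −B(X, φY)
  have K16 : ∀ X Y : H.TM, H.B Y (H.phi X) = -H.B X (H.phi Y) := by
    intro X Y
    have h := K12 X Y
    rw [tau0 X] at h
    linear_combination h
  -- (K17') : B(φX, φY) = B(X,Y) + η(X)u(Y) − u(X)B(Y,U)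
  have K17' : ∀ X Y : H.TM, H.B (H.phi X) (H.phi Y)
      = H.B X Y + H.gbar (X:E) (H.zeta:E) * H.gbar (Y:E) (H.V:E)
        - H.gbar (X:E) (H.V:E) * H.B Y H.U := by
    intro X Y
    have h := K16 Y (H.phi X)
    have h2 : H.B Y (H.phi (H.phi X))
        = -H.B Y X + H.gbar (X:E) (H.zeta:E) * H.B Y H.zeta
          + H.gbar (X:E) (H.V:E) * H.B Y H.U := by
      rw [H.B_eq, H.phi_sq X, H.nablaBar_add', H.nablaBar_add', H.nablaBar_neg,
        H.nablaBar_leibniz, H.nablaBar_leibniz]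
      simp only [map_add, map_neg, map_smul, LinearMap.add_apply, LinearMap.neg_apply,
        LinearMap.smul_apply, smul_eq_mul]
      rw [← H.B_eq Y X, ← H.B_eq Y H.zeta, ← H.B_eq Y H.U,
        H.g_tm_xi H.zeta, H.g_tm_xi H.U]
      ring
    rw [h2, H.B_zeta Y] at h
    linear_combination h - H.B_sym X Y
  -- (K18) : B(X,U) = u(X) B(U,U) − η(X)
  have K18 : ∀ X : H.TM, H.B X H.U
      = H.gbar (X:E) (H.V:E) * H.B H.U H.U - H.gbar (X:E) (H.zeta:E) := by
    intro X
    have ha := K17' X H.U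
    rw [H.phi_U, H.u_U, H.B_zero] at ha
    linear_combination -ha
  -- final contradiction at X = A*_ξ U
  have e1 := K18 (H.Astar H.U)
  rw [H.gA H.U H.V, H.gA H.U H.zeta, P2 H.U, H.B_zeta H.U, H.u_U] at e1
  have e2 : H.B (H.Astar H.U) H.U = 0 := by
    rw [H.B_sym]; exact P1 H.U H.U
  rw [e2] at e1
  exact one_ne_zero (by linear_combination -e1)
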